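/- (Concordance of the induced net on the middle surface: algebraic form.) Let I₁₁, I₁₂, I₂₂, II₁₁, κ, ξ be real numbers with Δ := I₁₁I₂₂ − I₁₂² > 0, II₁₁ ≠ 0, κ ≠ 0, ξ ≠ 0 and 1 + ξ ≠ 0, and let ε₁ = 1, ε₂ = −1. Define the matrices Ī = [[((1+ξ)²/4)I₁₁, ((1+ξ)²/(4ξ))I₁₂],[((1+ξ)²/(4ξ))I₁₂, ((1+ξ)²/(4ξ²))I₂₂]] and ĪI = [[((1+ξ)/2)II₁₁, 0],[0, −((1+ξ)/(2ξ))κ²Δ/II₁₁]], the vectors Xᵢ := (1, ζᵢ) with ζᵢ := εᵢ ξ^{i−1} II₁₁/(κ√Δ) (i = 1,2), and Ĩᵢⱼ := Xᵢᵀ Ī Xⱼ, ĨIᵢⱼ := Xᵢᵀ ĪI Xⱼ. Then: (a) Ĩ₁₁Ĩ₂₂ − Ĩ₁₂² = ((1+ξ)⁶/(16κ²ξ²))·II₁₁² > 0; (b) ĨI₁₂ = (1+ξ)·II₁₁; (c) ĨI₁₂²/(Ĩ₁₁Ĩ₂₂ − Ĩ₁₂²) = 16κ²ξ²/(1+ξ)⁴;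 and (d) (ĨI₁₁ĨI₂₂ − ĨI₁₂²)² = κ² · ĨI₁₂² · (Ĩ₁₁Ĩ₂₂ − Ĩ₁₂²), i.e. the Gauss curvature K̃ = det ĨI/det Ĩ and the Schief curvature squared σ̃² = ĨI₁₂²/det Ĩ of the net (X₁, X₂) satisfy K̃² = κ²σ̃². -/

import Mathlib

open Matrix
set_option maxHeartbeats 1000000

/-- **Concordance of the induced net on the middle surface: algebraic form.**
With `ε₁ = 1`, `ε₂ = −1`, `X₁ = (1, ζ₁)`, `X₂ = (1, ζ₂)`,
`ζᵢ = εᵢ ξ^{i−1} II₁₁/(κ√Δ)`, and `Ĩᵢⱼ = Xᵢᵀ Ī Xⱼ`, `ĨIᵢⱼ = Xᵢᵀ ĪI Xⱼ`, the net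
satisfies `det Ĩ > 0`, `ĨI₁₂ = (1+ξ)·II₁₁`, `ĨI₁₂²/det Ĩ = 16κ²ξ²/(1+ξ)⁴` and
`(det ĨI)² = κ²·ĨI₁₂²·det Ĩ`, i.e. `K̃² = κ²σ̃²`. -/
theorem induced_net_concordance_algebraic
    (I₁₁ I₁₂ I₂₂ II₁₁ κ ξ : ℝ)
    (Δ : ℝ) (hΔdef : Δ = I₁₁ * I₂₂ - I₁₂ ^ 2) (hΔ : 0 < Δ)
    (hII : II₁₁ ≠ 0) (hκ : κ ≠ 0) (hξ : ξ ≠ 0) (hξ1 : 1 + ξ ≠ 0)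
    (Ib IIb : Matrix (Fin 2) (Fin 2) ℝ)
    (hIb : Ib = !![(1 + ξ) ^ 2 / 4 * I₁₁, (1 + ξ) ^ 2 / (4 * ξ) * I₁₂;
                   (1 + ξ) ^ 2 / (4 * ξ) * I₁₂, (1 + ξ) ^ 2 / (4 * ξ ^ 2) * I₂₂])
    (hIIb : IIb = !![(1 + ξ) / 2 * II₁₁, 0;
                     0, -((1 + ξ) / (2 * ξ)) * κ ^ 2 * Δ / II₁₁])
    (ζ₁ ζ₂ : ℝ)
    (hζ₁ : ζ₁ = II₁₁ / (κ * Real.sqrt Δ))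
    (hζ₂ : ζ₂ = -(ξ * II₁₁ / (κ * Real.sqrt Δ)))
    (X₁ X₂ : Fin 2 → ℝ) (hX₁ : X₁ = ![1, ζ₁]) (hX₂ : X₂ = ![1, ζ₂])
    (tI tII : Fin 2 → Fin 2 → ℝ)
    (htI : ∀ i j : Fin 2, tI i j = ![X₁, X₂] i ⬝ᵥ (Ib *ᵥ ![X₁, X₂] j))
    (htII : ∀ i j : Fin 2, tII i j = ![X₁, X₂] i ⬝ᵥ (IIb *ᵥ ![X₁, X₂] j)) :
    (tI 0 0 * tI 1 1 - (tI 0 1) ^ 2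
        = (1 + ξ) ^ 6 / (16 * κ ^ 2 * ξ ^ 2) * II₁₁ ^ 2
      ∧ 0 < tI 0 0 * tI 1 1 - (tI 0 1) ^ 2)
    ∧ tII 0 1 = (1 + ξ) * II₁₁
    ∧ (tII 0 1) ^ 2 / (tI 0 0 * tI 1 1 - (tI 0 1) ^ 2)
        = 16 * κ ^ 2 * ξ ^ 2 / (1 + ξ) ^ 4
    ∧ (tII 0 0 * tII 1 1 - (tII 0 1) ^ 2) ^ 2
        = κ ^ 2 * (tII 0 1) ^ 2 * (tI 0 0 * tI 1 1 - (tI 0 1) ^ 2) := by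
  set s := Real.sqrt Δ with hs
  have hs2 : s ^ 2 = Δ := Real.sq_sqrt hΔ.le
  have hs0 : s ≠ 0 := by
    have := Real.sqrt_pos.mpr hΔ; simpa [hs] using this.ne'
  have e00 := htI 0 0; have e01 := htI 0 1; have e11 := htI 1 1
  have f00 := htII 0 0; have f01 := htII 0 1; have f11 := htII 1 1
  simp only [hIb, hIIb, hX₁, hX₂, hζ₁, hζ₂, Matrix.cons_val_zero, Matrix.cons_val_one,
    Matrix.head_cons, Matrix.mulVec, dotProduct, Fin.sum_univ_two,
    Matrix.cons_val', Matrix.empty_val', Matrix.cons_val_fin_one, Matrix.head_fin_const,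
    Matrix.of_apply] at e00 e01 e11 f00 f01 f11
  rw [← hs2] at f00 f01 f11
  have hI11 : I₁₁ ≠ 0 := by
    intro h; rw [h] at hΔdef; nlinarith [sq_nonneg I₁₂]
  have hI22 : I₂₂ = (s ^ 2 + I₁₂ ^ 2) / I₁₁ := by
    rw [hs2, hΔdef]; field_simp; ring
  rw [hI22] at e00 e01 e11
  have h1 : tI 0 0 * tI 1 1 - (tI 0 1) ^ 2
      = (1 + ξ) ^ 6 / (16 * κ ^ 2 * ξ ^ 2) * II₁₁ ^ 2 := by
    rw [e00, e01, e11]; field_simp; ring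
  have h2 : tII 0 1 = (1 + ξ) * II₁₁ := by
    rw [f01]; field_simp; ring
  have h3 : tII 0 0 * tII 1 1 - (tII 0 1) ^ 2
      = -((1 + ξ) ^ 4 * II₁₁ ^ 2) / (4 * ξ) := by
    rw [f00, f01, f11]; field_simp; ring
  have hpos : 0 < (1 + ξ) ^ 6 / (16 * κ ^ 2 * ξ ^ 2) * II₁₁ ^ 2 := by
    have h6 : 0 < (1 + ξ) ^ 6 := by positivity
    have : 0 < 16 * κ ^ 2 * ξ ^ 2 := by positivity
    positivity
  refine ⟨⟨h1, h1 ▸ hpos⟩, h2, ?_, ?_⟩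
  · rw [h1, h2]; field_simp
  · rw [h1, h3, h2]; field_simp; ring
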